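/- arXiv:2001.10436 — 5 statements merged into one kernel-verified Lean document; each statement's English description precedes it below -/
import Mathlib

section
/- There exists a constant C > 0 such that for all y in ℝ^d with d ≥ 2, the integral over ℝ^d of (1+|x|)^{-d} · (1+|x-y|)^{-(d+1)} dx is at most C · (1+|y|)^{-d}. -/
open MeasureTheory Real Filter

noncomputable section

/-- Key pointwise inequality: for `a, b, c ≥ 1` with `c ≤ a + b`,
`a⁻ⁿ b⁻⁽ⁿ⁺¹⁾ ≤ 2ⁿ⁺¹ c⁻ⁿ (a⁻⁽ⁿ⁺¹⁾ + b⁻⁽ⁿ⁺¹⁾)`. -/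
lemma key_ineq (n : ℕ) (a b c : ℝ) (ha : 1 ≤ a) (hb : 1 ≤ b) (hc : 1 ≤ c)
    (h : c ≤ a + b) :
    (a ^ n)⁻¹ * (b ^ (n + 1))⁻¹ ≤
      2 ^ (n + 1) * (c ^ n)⁻¹ * ((a ^ (n + 1))⁻¹ + (b ^ (n + 1))⁻¹) := by
  have ha0 : (0 : ℝ) < a := by linarith
  have hb0 : (0 : ℝ) < b := by linarith
  have hc0 : (0 : ℝ) < c := by linarith
  rcases le_or_gt c (2 * a) with h1 | h1
  · -- case `c ≤ 2a` : use `(aⁿ)⁻¹ ≤ 2ⁿ (cⁿ)⁻¹`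
    have hpow : c ^ n ≤ 2 ^ n * a ^ n := by
      calc c ^ n ≤ (2 * a) ^ n := pow_le_pow_left₀ hc0.le h1 n
        _ = 2 ^ n * a ^ n := mul_pow 2 a n
    have hinv : (a ^ n)⁻¹ ≤ 2 ^ n * (c ^ n)⁻¹ := by
      rw [← inv_inv ((2:ℝ) ^ n), ← mul_inv]
      apply inv_anti₀ (by positivity)
      rw [inv_mul_le_iff₀ (by positivity)]
      exact hpow
    calc (a ^ n)⁻¹ * (b ^ (n + 1))⁻¹
        ≤ (2 ^ n * (c ^ n)⁻¹) * (b ^ (n + 1))⁻¹ := by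
          gcongr
      _ ≤ (2 ^ (n + 1) * (c ^ n)⁻¹) * ((a ^ (n + 1))⁻¹ + (b ^ (n + 1))⁻¹) := by
          apply mul_le_mul
          · apply mul_le_mul_of_nonneg_right _ (by positivity)
            exact pow_le_pow_right₀ one_le_two (Nat.le_succ n)
          · exact le_add_of_nonneg_left (by positivity)
          · positivity
          · positivity
  · -- case `c > 2a` : then `b ≥ c - a ≥ c/2`, so `(b^(n+1))⁻¹ ≤ 2^(n+1) (c^(n+1))⁻¹`
    have hbc : c ≤ 2 * b := by linarith
    have hpow : c ^ (n + 1) ≤ 2 ^ (n + 1) * b ^ (n + 1) := by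
      calc c ^ (n + 1) ≤ (2 * b) ^ (n + 1) := pow_le_pow_left₀ hc0.le hbc _
        _ = 2 ^ (n + 1) * b ^ (n + 1) := mul_pow 2 b _
    have hinv : (b ^ (n + 1))⁻¹ ≤ 2 ^ (n + 1) * (c ^ (n + 1))⁻¹ := by
      rw [← inv_inv ((2:ℝ) ^ (n + 1)), ← mul_inv]
      apply inv_anti₀ (by positivity)
      rw [inv_mul_le_iff₀ (by positivity)]
      exact hpow
    have hac : a ≤ c := by linarith
    have hkey : (a ^ n)⁻¹ * (c ^ (n + 1))⁻¹ ≤ (c ^ n)⁻¹ * (a ^ (n + 1))⁻¹ := by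
      rw [← mul_inv, ← mul_inv]
      apply inv_anti₀ (by positivity)
      calc c ^ n * a ^ (n + 1) = (a ^ n * c ^ n) * a := by ring
        _ ≤ (a ^ n * c ^ n) * c := by
            apply mul_le_mul_of_nonneg_left hac (by positivity)
        _ = a ^ n * c ^ (n + 1) := by ring
    calc (a ^ n)⁻¹ * (b ^ (n + 1))⁻¹
        ≤ (a ^ n)⁻¹ * (2 ^ (n + 1) * (c ^ (n + 1))⁻¹) := by gcongr
      _ = 2 ^ (n + 1) * ((a ^ n)⁻¹ * (c ^ (n + 1))⁻¹) := by ring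
      _ ≤ 2 ^ (n + 1) * ((c ^ n)⁻¹ * (a ^ (n + 1))⁻¹) := by
          apply mul_le_mul_of_nonneg_left hkey (by positivity)
      _ ≤ 2 ^ (n + 1) * (c ^ n)⁻¹ * ((a ^ (n + 1))⁻¹ + (b ^ (n + 1))⁻¹) := by
          rw [mul_assoc]
          apply mul_le_mul_of_nonneg_left _ (by positivity)
          apply mul_le_mul_of_nonneg_left _ (by positivity)
          exact le_add_of_nonneg_right (by positivity)

theorem stmt_1 (d : ℕ) (hd : 2 ≤ d) :
    ∃ C : ℝ, 0 < C ∧ ∀ y : EuclideanSpace ℝ (Fin d),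
      (∫ x : EuclideanSpace ℝ (Fin d),
          (1 + ‖x‖) ^ (-(d : ℝ)) * (1 + ‖x - y‖) ^ (-((d : ℝ) + 1)))
        ≤ C * (1 + ‖y‖) ^ (-(d : ℝ)) := by
  set E := EuclideanSpace ℝ (Fin d)
  -- the dominating function
  set g : E → ℝ := fun x => ((1 + ‖x‖) ^ (d + 1))⁻¹ with hg_def
  have hg_eq : ∀ x : E, g x = (1 + ‖x‖) ^ (-((d : ℝ) + 1)) := by
    intro x
    have h1 : (0:ℝ) < 1 + ‖x‖ := by positivity
    rw [show -((d : ℝ) + 1) = -(((d + 1 : ℕ) : ℝ)) by push_cast; ring,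
      Real.rpow_neg h1.le, Real.rpow_natCast]
  have hg_int : Integrable g (volume : Measure E) := by
    have : Integrable (fun x : E => (1 + ‖x‖) ^ (-((d : ℝ) + 1))) volume := by
      apply integrable_one_add_norm
      rw [finrank_euclideanSpace_fin]
      linarith
    exact this.congr (Filter.Eventually.of_forall fun x => (hg_eq x).symm)
  have hg_nonneg : ∀ x : E, 0 ≤ g x := fun x => by positivity
  -- the integral of the dominating function is positive
  set A : ℝ := ∫ x : E, g x with hA_def
  have hA_pos : 0 < A := by
    rw [hA_def]
    rw [integral_pos_iff_support_of_nonneg hg_nonneg hg_int]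
    have hsupp : Function.support g = Set.univ := by
      ext x
      simp only [Function.mem_support, Set.mem_univ, iff_true]
      positivity
    rw [hsupp]
    exact isOpen_univ.measure_pos volume Set.univ_nonempty
  refine ⟨2 ^ (d + 2) * A, by positivity, fun y => ?_⟩
  set c : ℝ := 1 + ‖y‖ with hc_def
  have hc1 : 1 ≤ c := by simp only [hc_def]; linarith [norm_nonneg y]
  have hc0 : (0:ℝ) < c := by linarith
  have hcpow : c ^ (-(d:ℝ)) = (c ^ d)⁻¹ := by
    rw [Real.rpow_neg hc0.le, Real.rpow_natCast]
  -- the integrand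
  set f : E → ℝ := fun x => (1 + ‖x‖) ^ (-(d : ℝ)) * (1 + ‖x - y‖) ^ (-((d : ℝ) + 1))
    with hf_def
  have hf_eq : ∀ x : E, f x = ((1 + ‖x‖) ^ d)⁻¹ * g (x - y) := by
    intro x
    have h1 : (0:ℝ) < 1 + ‖x‖ := by positivity
    simp only [hf_def, hg_eq (x - y)]
    rw [Real.rpow_neg h1.le (d:ℝ), Real.rpow_natCast]
  -- pointwise bound
  have hbound : ∀ x : E, f x ≤ 2 ^ (d + 1) * (c ^ d)⁻¹ * (g x + g (x - y)) := by
    intro x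
    rw [hf_eq x, hg_def]
    have htri : c ≤ (1 + ‖x‖) + (1 + ‖x - y‖) := by
      have : ‖y‖ ≤ ‖x‖ + ‖x - y‖ := by
        calc ‖y‖ = ‖x - (x - y)‖ := by congr 1; abel
          _ ≤ ‖x‖ + ‖x - y‖ := norm_sub_le _ _
      simp only [hc_def]; linarith
    exact key_ineq d (1 + ‖x‖) (1 + ‖x - y‖) c (by linarith [norm_nonneg x])
      (by linarith [norm_nonneg (x - y)]) hc1 htri
  -- integrability of f
  have hgy_int : Integrable (fun x : E => g (x - y)) volume :=
    hg_int.comp_sub_right y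
  have hf_int : Integrable f volume := by
    apply Integrable.mono' hgy_int
    · apply Continuous.aestronglyMeasurable
      rw [hf_def]
      apply Continuous.mul
      · apply Continuous.rpow_const (by continuity)
        intro x; exact Or.inl (by positivity : (0:ℝ) < 1 + ‖x‖).ne'
      · apply Continuous.rpow_const (by continuity)
        intro x; exact Or.inl (by positivity : (0:ℝ) < 1 + ‖x - y‖).ne'
    · apply Filter.Eventually.of_forall
      intro x
      rw [Real.norm_of_nonneg (by rw [hf_eq]; positivity), hf_eq x]
      have h1 : ((1 + ‖x‖ : ℝ) ^ d)⁻¹ ≤ 1 := by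
        rw [inv_le_one_iff₀]
        right
        exact one_le_pow₀ (by linarith [norm_nonneg x])
      calc ((1 + ‖x‖) ^ d)⁻¹ * g (x - y) ≤ 1 * g (x - y) := by
            apply mul_le_mul_of_nonneg_right h1 (hg_nonneg _)
        _ = g (x - y) := one_mul _
  -- integrability of the bound
  have hb_int : Integrable (fun x : E => 2 ^ (d + 1) * (c ^ d)⁻¹ * (g x + g (x - y)))
      volume := ((hg_int.add hgy_int).const_mul _)
  -- conclude
  calc (∫ x : E, f x) ≤ ∫ x : E, 2 ^ (d + 1) * (c ^ d)⁻¹ * (g x + g (x - y)) :=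
        integral_mono hf_int hb_int hbound
    _ = 2 ^ (d + 1) * (c ^ d)⁻¹ * ((∫ x : E, g x) + ∫ x : E, g (x - y)) := by
        rw [integral_const_mul, integral_add hg_int hgy_int]
    _ = 2 ^ (d + 1) * (c ^ d)⁻¹ * (A + A) := by
        rw [integral_sub_right_eq_self g y]
    _ = 2 ^ (d + 2) * A * (c ^ d)⁻¹ := by ring
    _ = 2 ^ (d + 2) * A * c ^ (-(d:ℝ)) := by rw [hcpow]
end
end

section
/- Let d ∈ {2,3}, let A : ℝ^d → ℝ be a C¹ function such that |A(x)| ≤ C(1+|x|)^{-d} and |∇A(x)| ≤ C(1+|x|)^{-(d+1)} for all x. Then for every γ > d+1 there is a constant C' such that for all y ∈ ℝ^d, ∫_{ℝ^d} (1+|x|)^{-γ} |A(x−y) − A(−y)| dx ≤ C' (1+|y|)^{-d}. -/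
open MeasureTheory Real Filter

noncomputable section

/-- Auxiliary: antitonicity + doubling for `(1+s)^(-p)`. -/
lemma aux_double {p s t : ℝ} (hp : 0 ≤ p) (hs : 0 ≤ s) (ht : 0 ≤ t)
    (h : t / 2 ≤ s) : (1 + s) ^ (-p) ≤ 2 ^ p * (1 + t) ^ (-p) := by
  have h1 : (0 : ℝ) < (1 + t) / 2 := by linarith
  have h2 : (1 + t) / 2 ≤ 1 + s := by linarith
  have h3 : (1 + s) ^ (-p) ≤ ((1 + t) / 2) ^ (-p) :=
    Real.rpow_le_rpow_of_nonpos h1 h2 (neg_nonpos.mpr hp)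
  refine h3.trans_eq ?_
  rw [Real.div_rpow (by linarith) (by norm_num), Real.rpow_neg (by norm_num : (0:ℝ) ≤ 2)]
  rw [div_eq_mul_inv, inv_inv, mul_comm]

/-- Auxiliary: antitonicity of `(1+s)^(-p)` in `s`. -/
lemma aux_anti {p s t : ℝ} (hp : 0 ≤ p) (hs : 0 ≤ s) (h : s ≤ t) :
    (1 + t) ^ (-p) ≤ (1 + s) ^ (-p) :=
  Real.rpow_le_rpow_of_nonpos (by linarith) (by linarith) (neg_nonpos.mpr hp)

/-- Key pointwise convolution-type inequality. -/
lemma aux_key {γ : ℝ} {dr : ℝ} (hdr : 0 ≤ dr) (hγ : dr ≤ γ) (a b c : ℝ)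
    (ha : 0 ≤ a) (hb : 0 ≤ b) (hc : 0 ≤ c) (htri : c ≤ a + b) :
    (1 + a) ^ (-γ) * (1 + b) ^ (-dr) ≤
      2 ^ dr * (1 + c) ^ (-dr) * ((1 + a) ^ (-γ) + (1 + b) ^ (-γ)) := by
  have hua : (0:ℝ) ≤ (1 + a) ^ (-γ) := Real.rpow_nonneg (by linarith) _
  have hub : (0:ℝ) ≤ (1 + b) ^ (-γ) := Real.rpow_nonneg (by linarith) _
  have hda : (0:ℝ) ≤ (1 + a) ^ (-dr) := Real.rpow_nonneg (by linarith) _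
  have hdb : (0:ℝ) ≤ (1 + b) ^ (-dr) := Real.rpow_nonneg (by linarith) _
  rcases le_total (c / 2) b with hcb | hbc
  · -- b ≥ c/2 : (1+b)^{-dr} ≤ 2^dr (1+c)^{-dr}
    have h1 : (1 + b) ^ (-dr) ≤ 2 ^ dr * (1 + c) ^ (-dr) := aux_double hdr hb hc hcb
    calc (1 + a) ^ (-γ) * (1 + b) ^ (-dr)
        ≤ (1 + a) ^ (-γ) * (2 ^ dr * (1 + c) ^ (-dr)) := by
          exact mul_le_mul_of_nonneg_left h1 hua
      _ = 2 ^ dr * (1 + c) ^ (-dr) * (1 + a) ^ (-γ) := by ring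
      _ ≤ 2 ^ dr * (1 + c) ^ (-dr) * ((1 + a) ^ (-γ) + (1 + b) ^ (-γ)) := by
          have h2 : (0:ℝ) ≤ 2 ^ dr * (1 + c) ^ (-dr) := by positivity
          nlinarith
  · -- a ≥ c/2
    have hac : c / 2 ≤ a := by linarith
    have h1 : (1 + a) ^ (-dr) ≤ 2 ^ dr * (1 + c) ^ (-dr) := aux_double hdr ha hc hac
    have hsplit : (1 + a) ^ (-γ) = (1 + a) ^ (-dr) * (1 + a) ^ (-(γ - dr)) := by
      rw [← Real.rpow_add (by linarith)]; ring_nf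
    have hmid : (1 + a) ^ (-(γ - dr)) * (1 + b) ^ (-dr) ≤
        (1 + a) ^ (-γ) + (1 + b) ^ (-γ) := by
      rcases le_total a b with hab | hba
      · have h2 : (1 + b) ^ (-dr) ≤ (1 + a) ^ (-dr) := aux_anti hdr ha hab
        have h3 : (1 + a) ^ (-(γ - dr)) * (1 + b) ^ (-dr)
            ≤ (1 + a) ^ (-(γ - dr)) * (1 + a) ^ (-dr) :=
          mul_le_mul_of_nonneg_left h2 (Real.rpow_nonneg (by linarith) _)
        have h4 : (1 + a) ^ (-(γ - dr)) * (1 + a) ^ (-dr) = (1 + a) ^ (-γ) := by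
          rw [← Real.rpow_add (by linarith)]; ring_nf
        linarith [h3, h4.le]
      · have h2 : (1 + a) ^ (-(γ - dr)) ≤ (1 + b) ^ (-(γ - dr)) :=
          aux_anti (by linarith) hb hba
        have h3 : (1 + a) ^ (-(γ - dr)) * (1 + b) ^ (-dr)
            ≤ (1 + b) ^ (-(γ - dr)) * (1 + b) ^ (-dr) :=
          mul_le_mul_of_nonneg_right h2 hdb
        have h4 : (1 + b) ^ (-(γ - dr)) * (1 + b) ^ (-dr) = (1 + b) ^ (-γ) := by
          rw [← Real.rpow_add (by linarith)]; ring_nf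
        linarith [h3, h4.le]
    calc (1 + a) ^ (-γ) * (1 + b) ^ (-dr)
        = (1 + a) ^ (-dr) * ((1 + a) ^ (-(γ - dr)) * (1 + b) ^ (-dr)) := by
          rw [hsplit]; ring
      _ ≤ (2 ^ dr * (1 + c) ^ (-dr)) * ((1 + a) ^ (-(γ - dr)) * (1 + b) ^ (-dr)) := by
          refine mul_le_mul_of_nonneg_right h1 ?_
          positivity
      _ ≤ 2 ^ dr * (1 + c) ^ (-dr) * ((1 + a) ^ (-γ) + (1 + b) ^ (-γ)) := by
          refine mul_le_mul_of_nonneg_left hmid ?_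
          positivity

theorem stmt_4 (d : ℕ) (hd : d = 2 ∨ d = 3)
    (A : EuclideanSpace ℝ (Fin d) → ℝ) (hA : ContDiff ℝ 1 A)
    (C : ℝ) (hbound : ∀ x : EuclideanSpace ℝ (Fin d), |A x| ≤ C * (1 + ‖x‖) ^ (-(d : ℝ)))
    (hgrad : ∀ x : EuclideanSpace ℝ (Fin d), ‖fderiv ℝ A x‖ ≤ C * (1 + ‖x‖) ^ (-((d : ℝ) + 1))) :
    ∀ γ : ℝ, (d : ℝ) + 1 < γ →
      ∃ C' : ℝ, 0 < C' ∧ ∀ y : EuclideanSpace ℝ (Fin d),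
        (∫ x : EuclideanSpace ℝ (Fin d), (1 + ‖x‖) ^ (-γ) * |A (x - y) - A (-y)|)
          ≤ C' * (1 + ‖y‖) ^ (-(d : ℝ)) := by
  intro γ hγ
  have hC : 0 ≤ C := by
    have h0 := hbound 0
    have : ‖(0 : EuclideanSpace ℝ (Fin d))‖ = 0 := norm_zero
    rw [this] at h0
    simp only [add_zero, Real.one_rpow, mul_one] at h0
    exact (abs_nonneg _).trans h0
  have hdγ : (Module.finrank ℝ (EuclideanSpace ℝ (Fin d)) : ℝ) < γ := by
    rw [finrank_euclideanSpace_fin]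
    have : (d : ℝ) < (d : ℝ) + 1 := by linarith
    linarith
  have hint : Integrable (fun x : EuclideanSpace ℝ (Fin d) => (1 + ‖x‖) ^ (-γ)) :=
    integrable_one_add_norm hdγ
  set I : ℝ := ∫ x : EuclideanSpace ℝ (Fin d), (1 + ‖x‖) ^ (-γ) with hI
  have hInn : 0 ≤ I := integral_nonneg fun x => Real.rpow_nonneg (by positivity) _
  set K : ℝ := C * (2 ^ (d : ℝ) + 1) with hK
  have hKnn : 0 ≤ K := by positivity
  refine ⟨2 * K * I + 1, by positivity, fun y => ?_⟩
  -- the dominating function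
  have hint2 : Integrable (fun x : EuclideanSpace ℝ (Fin d) => (1 + ‖x - y‖) ^ (-γ)) :=
    hint.comp_sub_right y
  have hg : Integrable (fun x : EuclideanSpace ℝ (Fin d) =>
      K * (1 + ‖y‖) ^ (-(d : ℝ)) * ((1 + ‖x‖) ^ (-γ) + (1 + ‖x - y‖) ^ (-γ))) :=
    (hint.add hint2).const_mul _
  have hpt : ∀ x : EuclideanSpace ℝ (Fin d),
      (1 + ‖x‖) ^ (-γ) * |A (x - y) - A (-y)| ≤
        K * (1 + ‖y‖) ^ (-(d : ℝ)) * ((1 + ‖x‖) ^ (-γ) + (1 + ‖x - y‖) ^ (-γ)) := by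
    intro x
    have hua : (0:ℝ) ≤ (1 + ‖x‖) ^ (-γ) := Real.rpow_nonneg (by positivity) _
    have hub : (0:ℝ) ≤ (1 + ‖x - y‖) ^ (-γ) := Real.rpow_nonneg (by positivity) _
    have huy : (0:ℝ) ≤ (1 + ‖y‖) ^ (-(d:ℝ)) := Real.rpow_nonneg (by positivity) _
    have htri : ‖y‖ ≤ ‖x‖ + ‖x - y‖ := by
      have := norm_sub_le x (x - y)
      simpa using this
    have h1 : |A (x - y) - A (-y)| ≤
        C * (1 + ‖x - y‖) ^ (-(d:ℝ)) + C * (1 + ‖y‖) ^ (-(d:ℝ)) := by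
      have := abs_sub (A (x - y)) (A (-y))
      have hb1 := hbound (x - y)
      have hb2 := hbound (-y)
      rw [norm_neg] at hb2
      calc |A (x - y) - A (-y)| ≤ |A (x - y)| + |A (-y)| := abs_sub _ _
        _ ≤ C * (1 + ‖x - y‖) ^ (-(d:ℝ)) + C * (1 + ‖y‖) ^ (-(d:ℝ)) := by
            exact add_le_add hb1 hb2
    have h2 : (1 + ‖x‖) ^ (-γ) * |A (x - y) - A (-y)| ≤
        C * ((1 + ‖x‖) ^ (-γ) * (1 + ‖x - y‖) ^ (-(d:ℝ)))
          + C * (1 + ‖y‖) ^ (-(d:ℝ)) * (1 + ‖x‖) ^ (-γ) := by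
      have := mul_le_mul_of_nonneg_left h1 hua
      nlinarith [this]
    have h3 : (1 + ‖x‖) ^ (-γ) * (1 + ‖x - y‖) ^ (-(d:ℝ)) ≤
        2 ^ (d:ℝ) * (1 + ‖y‖) ^ (-(d:ℝ)) * ((1 + ‖x‖) ^ (-γ) + (1 + ‖x - y‖) ^ (-γ)) :=
      aux_key (by positivity) (by linarith [Nat.cast_nonneg (α := ℝ) d])
        (‖x‖) (‖x - y‖) (‖y‖) (norm_nonneg _) (norm_nonneg _) (norm_nonneg _) htri
    have h4 : (1 + ‖y‖) ^ (-(d:ℝ)) * (1 + ‖x‖) ^ (-γ) ≤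
        (1 + ‖y‖) ^ (-(d:ℝ)) * ((1 + ‖x‖) ^ (-γ) + (1 + ‖x - y‖) ^ (-γ)) := by
      nlinarith
    have h2d : (0:ℝ) ≤ 2 ^ (d:ℝ) := by positivity
    calc (1 + ‖x‖) ^ (-γ) * |A (x - y) - A (-y)|
        ≤ C * ((1 + ‖x‖) ^ (-γ) * (1 + ‖x - y‖) ^ (-(d:ℝ)))
          + C * (1 + ‖y‖) ^ (-(d:ℝ)) * (1 + ‖x‖) ^ (-γ) := h2
      _ ≤ C * (2 ^ (d:ℝ) * (1 + ‖y‖) ^ (-(d:ℝ)) * ((1 + ‖x‖) ^ (-γ) + (1 + ‖x - y‖) ^ (-γ)))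
          + C * ((1 + ‖y‖) ^ (-(d:ℝ)) * ((1 + ‖x‖) ^ (-γ) + (1 + ‖x - y‖) ^ (-γ))) := by
          refine add_le_add (mul_le_mul_of_nonneg_left h3 hC) ?_
          rw [mul_assoc]
          exact mul_le_mul_of_nonneg_left h4 hC
      _ = K * (1 + ‖y‖) ^ (-(d : ℝ)) * ((1 + ‖x‖) ^ (-γ) + (1 + ‖x - y‖) ^ (-γ)) := by
          rw [hK]; ring
  have hmono : (∫ x : EuclideanSpace ℝ (Fin d), (1 + ‖x‖) ^ (-γ) * |A (x - y) - A (-y)|)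
      ≤ ∫ x : EuclideanSpace ℝ (Fin d),
          K * (1 + ‖y‖) ^ (-(d : ℝ)) * ((1 + ‖x‖) ^ (-γ) + (1 + ‖x - y‖) ^ (-γ)) := by
    refine integral_mono_of_nonneg ?_ hg ?_
    · exact Eventually.of_forall fun x => by positivity
    · exact Eventually.of_forall hpt
  have heval : (∫ x : EuclideanSpace ℝ (Fin d),
      K * (1 + ‖y‖) ^ (-(d : ℝ)) * ((1 + ‖x‖) ^ (-γ) + (1 + ‖x - y‖) ^ (-γ)))
      = K * (1 + ‖y‖) ^ (-(d : ℝ)) * (I + I) := by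
    rw [integral_const_mul, integral_add hint hint2]
    congr 2
    exact integral_sub_right_eq_self (fun x : EuclideanSpace ℝ (Fin d) => (1 + ‖x‖) ^ (-γ)) y
  have huy : (0:ℝ) ≤ (1 + ‖y‖) ^ (-(d:ℝ)) := Real.rpow_nonneg (by positivity) _
  calc (∫ x : EuclideanSpace ℝ (Fin d), (1 + ‖x‖) ^ (-γ) * |A (x - y) - A (-y)|)
      ≤ K * (1 + ‖y‖) ^ (-(d : ℝ)) * (I + I) := by rw [← heval]; exact hmono
    _ = 2 * K * I * (1 + ‖y‖) ^ (-(d : ℝ)) := by ring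
    _ ≤ (2 * K * I + 1) * (1 + ‖y‖) ^ (-(d : ℝ)) := by nlinarith
end
end

section
/- Let A : ℝ^d → ℝ be measurable with |A(x)| ≤ C(1+|x|)^{-d} and (in the sense of the mean value inequality) |A(x−y) − A(−y)| ≤ C' |x| / (1+ min(|x−y|,|y|))^{d+1} for |x| < |y|/2. Then for h ∈ L¹(ℝ^d, (1+|x|)^{-(d+1)} dx) and γ > d+1, the function V₂(x) = ∫ (A(x−y) − A(−y)) h(y) dy belongs to L¹(ℝ^d, (1+|x|)^{-γ} dx). -/
open MeasureTheory Real Filter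
open scoped ENNReal NNReal

noncomputable section

private lemma aux_half_rpow_neg {a : ℝ} (ha : 0 ≤ a) (s : ℝ) :
    (a / 2) ^ (-s) = 2 ^ s * a ^ (-s) := by
  rw [Real.rpow_neg (by positivity), Real.div_rpow ha (by norm_num), inv_div,
    div_eq_mul_inv, ← Real.rpow_neg ha]

private lemma aux_K {a b C C' : ℝ} (ha : 0 < a) (hb : 0 < b) (hC : 0 ≤ C) (hC' : 0 ≤ C') :
    C' * a ≤ (a + b + 2) * (C + C' + 1) ∧
    a * C + 2 * C ≤ (a + b + 2) * (C + C' + 1) ∧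
    b * C ≤ (a + b + 2) * (C + C' + 1) ∧
    2 * C ≤ (a + b + 2) * (C + C' + 1) ∧
    0 ≤ (a + b + 2) * (C + C' + 1) := by
  refine ⟨?_, ?_, ?_, ?_, ?_⟩ <;> nlinarith

theorem stmt_5 (d : ℕ) (hd : d = 2 ∨ d = 3)
    (A : EuclideanSpace ℝ (Fin d) → ℝ) (hAmeas : Measurable A)
    (C C' : ℝ)
    (hbound : ∀ x : EuclideanSpace ℝ (Fin d), |A x| ≤ C * (1 + ‖x‖) ^ (-(d : ℝ)))
    (hMVI : ∀ x y : EuclideanSpace ℝ (Fin d), ‖x‖ < ‖y‖ / 2 →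
      |A (x - y) - A (-y)| ≤ C' * ‖x‖ / (1 + min ‖x - y‖ ‖y‖) ^ ((d : ℝ) + 1))
    (h : EuclideanSpace ℝ (Fin d) → ℝ) (hmeas : Measurable h)
    (hint : Integrable (fun y : EuclideanSpace ℝ (Fin d) =>
      |h y| * (1 + ‖y‖) ^ (-((d : ℝ) + 1))))
    (γ : ℝ) (hγ : (d : ℝ) + 1 < γ) :
    Integrable (fun x : EuclideanSpace ℝ (Fin d) =>
      (∫ y : EuclideanSpace ℝ (Fin d), (A (x - y) - A (-y)) * h y) * (1 + ‖x‖) ^ (-γ)) := by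
  have hd0 : 0 < d := by rcases hd with h | h <;> omega
  have hdγ : (0:ℝ) < (d:ℝ) := by exact_mod_cast hd0
  -- nonnegativity of the constants
  have hC : 0 ≤ C := by
    have h0 := hbound 0
    simp only [norm_zero, add_zero, Real.one_rpow, mul_one] at h0
    exact (abs_nonneg _).trans h0
  have hC' : 0 ≤ C' := by
    set e : EuclideanSpace ℝ (Fin d) := EuclideanSpace.single (⟨0, hd0⟩ : Fin d) (1:ℝ) with he_def
    have he : ‖e‖ = 1 := by simp [he_def]
    have h3 : ‖((3:ℝ) • e : EuclideanSpace ℝ (Fin d))‖ = 3 := by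
      rw [norm_smul, he]; norm_num
    have hlt : ‖e‖ < ‖((3:ℝ) • e : EuclideanSpace ℝ (Fin d))‖ / 2 := by
      rw [he, h3]; norm_num
    have hm := hMVI e ((3:ℝ) • e) hlt
    rw [he, mul_one] at hm
    have hpos : (0:ℝ) < (1 + min ‖e - (3:ℝ) • e‖ ‖((3:ℝ) • e : EuclideanSpace ℝ (Fin d))‖) ^ ((d:ℝ) + 1) := by
      apply Real.rpow_pos_of_pos
      have := norm_nonneg (e - (3:ℝ) • e)
      have := norm_nonneg ((3:ℝ) • e : EuclideanSpace ℝ (Fin d))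
      have : (0:ℝ) ≤ min ‖e - (3:ℝ) • e‖ ‖((3:ℝ) • e : EuclideanSpace ℝ (Fin d))‖ :=
        le_min (by assumption) (by assumption)
      linarith
    have h0 : 0 ≤ C' / (1 + min ‖e - (3:ℝ) • e‖ ‖((3:ℝ) • e : EuclideanSpace ℝ (Fin d))‖) ^ ((d:ℝ) + 1) :=
      (abs_nonneg _).trans hm
    by_contra hneg
    push_neg at hneg
    have : C' / (1 + min ‖e - (3:ℝ) • e‖ ‖((3:ℝ) • e : EuclideanSpace ℝ (Fin d))‖) ^ ((d:ℝ) + 1) < 0 :=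
      div_neg_of_neg_of_pos hneg hpos
    linarith
  -- the constant K
  set K : ℝ := ((2:ℝ) ^ ((d:ℝ) + 1) + (2:ℝ) ^ γ + 2) * (C + C' + 1) with hK_def
  have h2d : (0:ℝ) < (2:ℝ) ^ ((d:ℝ) + 1) := Real.rpow_pos_of_pos two_pos _
  have h2γ : (0:ℝ) < (2:ℝ) ^ γ := Real.rpow_pos_of_pos two_pos _
  obtain ⟨hk1, hk2, hk3, hk4, hk5⟩ := aux_K h2d h2γ hC hC'
  have hK0 : 0 ≤ K := by rw [hK_def]; exact hk5
  -- the key pointwise estimate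
  have key : ∀ x y : EuclideanSpace ℝ (Fin d),
      |A (x - y) - A (-y)| * (1 + ‖x‖) ^ (-γ) ≤
        K * ((1 + ‖y‖) ^ (-((d:ℝ) + 1)) *
          ((1 + ‖x‖) ^ (-(γ - 1)) + (1 + ‖x - y‖) ^ (-(γ - 1)))) := by
    intro x y
    have hx1 : (1:ℝ) ≤ 1 + ‖x‖ := by linarith [norm_nonneg x]
    have hy1 : (1:ℝ) ≤ 1 + ‖y‖ := by linarith [norm_nonneg y]
    have hxy1 : (1:ℝ) ≤ 1 + ‖x - y‖ := by linarith [norm_nonneg (x - y)]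
    have hx0 : (0:ℝ) < 1 + ‖x‖ := lt_of_lt_of_le one_pos hx1
    have hy0 : (0:ℝ) < 1 + ‖y‖ := lt_of_lt_of_le one_pos hy1
    have hxy0 : (0:ℝ) < 1 + ‖x - y‖ := lt_of_lt_of_le one_pos hxy1
    set P1 : ℝ := (1 + ‖x‖) ^ (-(γ - 1)) with hP1
    set P2 : ℝ := (1 + ‖x - y‖) ^ (-(γ - 1)) with hP2
    set Y : ℝ := (1 + ‖y‖) ^ (-((d:ℝ) + 1)) with hY
    have hP1p : 0 < P1 := Real.rpow_pos_of_pos hx0 _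
    have hP2p : 0 < P2 := Real.rpow_pos_of_pos hxy0 _
    have hYp : 0 < Y := Real.rpow_pos_of_pos hy0 _
    have hwnn : 0 ≤ (1 + ‖x‖) ^ (-γ) := Real.rpow_nonneg hx0.le _
    have hsplit : (1 + ‖x‖) ^ (-γ) = P1 * (1 + ‖x‖) ^ (-(1:ℝ)) := by
      rw [hP1, ← Real.rpow_add hx0]
      congr 1
      ring
    rcases lt_or_ge ‖x‖ (‖y‖ / 2) with hcase | hcase
    · -- region 1 : mean value inequality
      have hm := hMVI x y hcase
      have hsub : ‖y‖ - ‖x‖ ≤ ‖x - y‖ := by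
        have := norm_sub_norm_le y x
        rwa [norm_sub_rev] at this
      have hmp : (0:ℝ) < (1 + ‖y‖) / 2 := by linarith
      have hmin : (1 + ‖y‖) / 2 ≤ 1 + min ‖x - y‖ ‖y‖ := by
        have h1 : ‖y‖ / 2 ≤ ‖x - y‖ := by linarith
        have h2 : ‖y‖ / 2 ≤ ‖y‖ := by linarith [norm_nonneg x]
        have := le_min h1 h2
        linarith
      have hpow : ((1 + ‖y‖) / 2) ^ ((d:ℝ) + 1) ≤ (1 + min ‖x - y‖ ‖y‖) ^ ((d:ℝ) + 1) :=
        Real.rpow_le_rpow hmp.le hmin (by positivity)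
      have hpowp : (0:ℝ) < ((1 + ‖y‖) / 2) ^ ((d:ℝ) + 1) := Real.rpow_pos_of_pos hmp _
      have hstep1 : C' * ‖x‖ / (1 + min ‖x - y‖ ‖y‖) ^ ((d:ℝ) + 1)
          ≤ C' * ‖x‖ / ((1 + ‖y‖) / 2) ^ ((d:ℝ) + 1) :=
        div_le_div_of_nonneg_left (mul_nonneg hC' (norm_nonneg x)) hpowp hpow
      have hstep2 : C' * ‖x‖ / ((1 + ‖y‖) / 2) ^ ((d:ℝ) + 1)
          = C' * ‖x‖ * (2 ^ ((d:ℝ) + 1) * Y) := by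
        rw [div_eq_mul_inv, ← Real.rpow_neg hmp.le, aux_half_rpow_neg (by linarith)]
      have hxP : ‖x‖ * (1 + ‖x‖) ^ (-γ) ≤ P1 := by
        have h1 : ‖x‖ * (1 + ‖x‖) ^ (-γ) ≤ (1 + ‖x‖) * (1 + ‖x‖) ^ (-γ) :=
          mul_le_mul_of_nonneg_right (by linarith) hwnn
        have h2 : (1 + ‖x‖) * (1 + ‖x‖) ^ (-γ) = P1 := by
          rw [hP1, show -(γ - 1) = 1 + -γ by ring, Real.rpow_add hx0, Real.rpow_one]
        linarith
      have hcK : C' * 2 ^ ((d:ℝ) + 1) ≤ K := by rw [hK_def]; exact hk1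
      calc |A (x - y) - A (-y)| * (1 + ‖x‖) ^ (-γ)
          ≤ (C' * ‖x‖ * (2 ^ ((d:ℝ) + 1) * Y)) * (1 + ‖x‖) ^ (-γ) := by
            apply mul_le_mul_of_nonneg_right _ hwnn
            calc |A (x - y) - A (-y)|
                ≤ C' * ‖x‖ / (1 + min ‖x - y‖ ‖y‖) ^ ((d:ℝ) + 1) := hm
              _ ≤ C' * ‖x‖ / ((1 + ‖y‖) / 2) ^ ((d:ℝ) + 1) := hstep1
              _ = C' * ‖x‖ * (2 ^ ((d:ℝ) + 1) * Y) := hstep2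
        _ = (C' * 2 ^ ((d:ℝ) + 1)) * Y * (‖x‖ * (1 + ‖x‖) ^ (-γ)) := by ring
        _ ≤ (C' * 2 ^ ((d:ℝ) + 1)) * Y * P1 := by
            apply mul_le_mul_of_nonneg_left hxP
            positivity
        _ = (C' * 2 ^ ((d:ℝ) + 1)) * (Y * P1) := by ring
        _ ≤ K * (Y * P1) := mul_le_mul_of_nonneg_right hcK (by positivity)
        _ ≤ K * (Y * (P1 + P2)) := by
            apply mul_le_mul_of_nonneg_left _ hK0
            apply mul_le_mul_of_nonneg_left _ hYp.le
            linarith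
    · -- region 2 : size bounds
      have hxge : (1 + ‖y‖) / 2 ≤ 1 + ‖x‖ := by linarith
      have htri : |A (x - y) - A (-y)| ≤ C * (1 + ‖x - y‖) ^ (-(d:ℝ)) + C * (1 + ‖y‖) ^ (-(d:ℝ)) := by
        have h2 := hbound (-y)
        rw [norm_neg] at h2
        calc |A (x - y) - A (-y)| ≤ |A (x - y)| + |A (-y)| := abs_sub _ _
          _ ≤ _ := add_le_add (hbound (x - y)) h2
      have hmp : (0:ℝ) < (1 + ‖y‖) / 2 := by linarith
      have hα : (1 + ‖x‖) ^ (-γ) ≤ 2 * (1 + ‖y‖)⁻¹ * P1 := by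
        rw [hsplit]
        have h1 : (1 + ‖x‖) ^ (-(1:ℝ)) ≤ ((1 + ‖y‖) / 2) ^ (-(1:ℝ)) :=
          Real.rpow_le_rpow_of_nonpos hmp hxge (by norm_num)
        have h2 : ((1 + ‖y‖) / 2) ^ (-(1:ℝ)) = 2 * (1 + ‖y‖)⁻¹ := by
          rw [Real.rpow_neg_one, inv_div, div_eq_mul_inv]
        calc P1 * (1 + ‖x‖) ^ (-(1:ℝ)) ≤ P1 * (2 * (1 + ‖y‖)⁻¹) := by
              rw [← h2]; exact mul_le_mul_of_nonneg_left h1 hP1p.le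
          _ = 2 * (1 + ‖y‖)⁻¹ * P1 := by ring
      have hYsplit : (1 + ‖y‖) ^ (-(d:ℝ)) * (1 + ‖y‖)⁻¹ = Y := by
        rw [hY, ← Real.rpow_neg_one (1 + ‖y‖), ← Real.rpow_add hy0]
        congr 1
        ring
      have hterm2 : (1 + ‖y‖) ^ (-(d:ℝ)) * (1 + ‖x‖) ^ (-γ) ≤ 2 * (Y * P1) := by
        calc (1 + ‖y‖) ^ (-(d:ℝ)) * (1 + ‖x‖) ^ (-γ)
            ≤ (1 + ‖y‖) ^ (-(d:ℝ)) * (2 * (1 + ‖y‖)⁻¹ * P1) :=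
              mul_le_mul_of_nonneg_left hα (Real.rpow_nonneg hy0.le _)
          _ = 2 * (((1 + ‖y‖) ^ (-(d:ℝ)) * (1 + ‖y‖)⁻¹) * P1) := by ring
          _ = 2 * (Y * P1) := by rw [hYsplit]
      have hmaj : |A (x - y) - A (-y)| * (1 + ‖x‖) ^ (-γ) ≤
          C * ((1 + ‖x - y‖) ^ (-(d:ℝ)) * (1 + ‖x‖) ^ (-γ)) +
          C * ((1 + ‖y‖) ^ (-(d:ℝ)) * (1 + ‖x‖) ^ (-γ)) := by
        have := mul_le_mul_of_nonneg_right htri hwnn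
        calc |A (x - y) - A (-y)| * (1 + ‖x‖) ^ (-γ)
            ≤ (C * (1 + ‖x - y‖) ^ (-(d:ℝ)) + C * (1 + ‖y‖) ^ (-(d:ℝ))) * (1 + ‖x‖) ^ (-γ)
              := this
          _ = _ := by ring
      rcases le_or_gt ((1 + ‖y‖) / 2) (1 + ‖x - y‖) with hcase2 | hcase2
      · -- case A
        have h1 : (1 + ‖x - y‖) ^ (-(d:ℝ)) ≤ 2 ^ (d:ℝ) * (1 + ‖y‖) ^ (-(d:ℝ)) := by
          have := Real.rpow_le_rpow_of_nonpos hmp hcase2 (by linarith : -(d:ℝ) ≤ 0)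
          rwa [aux_half_rpow_neg (by linarith) (d:ℝ)] at this
        have hterm1 : (1 + ‖x - y‖) ^ (-(d:ℝ)) * (1 + ‖x‖) ^ (-γ) ≤ 2 ^ (d:ℝ) * (2 * (Y * P1)) := by
          calc (1 + ‖x - y‖) ^ (-(d:ℝ)) * (1 + ‖x‖) ^ (-γ)
              ≤ (2 ^ (d:ℝ) * (1 + ‖y‖) ^ (-(d:ℝ))) * (1 + ‖x‖) ^ (-γ) :=
                mul_le_mul_of_nonneg_right h1 hwnn
            _ = 2 ^ (d:ℝ) * ((1 + ‖y‖) ^ (-(d:ℝ)) * (1 + ‖x‖) ^ (-γ)) := by ring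
            _ ≤ 2 ^ (d:ℝ) * (2 * (Y * P1)) := by
                apply mul_le_mul_of_nonneg_left hterm2
                positivity
        have h2dd : (0:ℝ) < (2:ℝ) ^ (d:ℝ) := Real.rpow_pos_of_pos two_pos _
        have h2deq : (2:ℝ) ^ ((d:ℝ) + 1) = (2:ℝ) ^ (d:ℝ) * 2 := by
          rw [Real.rpow_add two_pos, Real.rpow_one]
        have hcK : 2 ^ (d:ℝ) * 2 * C + 2 * C ≤ K := by
          rw [hK_def]
          calc 2 ^ (d:ℝ) * 2 * C + 2 * C = 2 ^ ((d:ℝ) + 1) * C + 2 * C := by rw [h2deq]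
            _ ≤ _ := hk2
        calc |A (x - y) - A (-y)| * (1 + ‖x‖) ^ (-γ)
            ≤ C * (2 ^ (d:ℝ) * (2 * (Y * P1))) + C * (2 * (Y * P1)) := by
              refine hmaj.trans (add_le_add ?_ ?_)
              · exact mul_le_mul_of_nonneg_left hterm1 hC
              · exact mul_le_mul_of_nonneg_left hterm2 hC
          _ = (2 ^ (d:ℝ) * 2 * C + 2 * C) * (Y * P1) := by ring
          _ ≤ K * (Y * P1) := mul_le_mul_of_nonneg_right hcK (by positivity)
          _ ≤ K * (Y * (P1 + P2)) := by
              apply mul_le_mul_of_nonneg_left _ hK0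
              apply mul_le_mul_of_nonneg_left _ hYp.le
              linarith
      · -- case B
        have hαB : (1 + ‖x‖) ^ (-γ) ≤ 2 ^ γ * (1 + ‖y‖) ^ (-γ) := by
          have := Real.rpow_le_rpow_of_nonpos hmp hxge (by linarith : -γ ≤ 0)
          rwa [aux_half_rpow_neg (by linarith) γ] at this
        have hsplitd : (1 + ‖x - y‖) ^ (-(d:ℝ)) = (1 + ‖x - y‖) ^ (γ - 1 - d) * P2 := by
          rw [hP2, ← Real.rpow_add hxy0]
          congr 1
          ring
        have hxylt : 1 + ‖x - y‖ ≤ 1 + ‖y‖ := by linarith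
        have hmono : (1 + ‖x - y‖) ^ (γ - 1 - d) ≤ (1 + ‖y‖) ^ (γ - 1 - d) :=
          Real.rpow_le_rpow hxy0.le hxylt (by linarith)
        have hycomb : (1 + ‖y‖) ^ (γ - 1 - d) * (1 + ‖y‖) ^ (-γ) = Y := by
          rw [hY, ← Real.rpow_add hy0]
          congr 1
          ring
        have hterm1 : (1 + ‖x - y‖) ^ (-(d:ℝ)) * (1 + ‖x‖) ^ (-γ) ≤ 2 ^ γ * (Y * P2) := by
          calc (1 + ‖x - y‖) ^ (-(d:ℝ)) * (1 + ‖x‖) ^ (-γ)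
              = ((1 + ‖x - y‖) ^ (γ - 1 - d) * P2) * (1 + ‖x‖) ^ (-γ) := by rw [hsplitd]
            _ ≤ ((1 + ‖y‖) ^ (γ - 1 - d) * P2) * (2 ^ γ * (1 + ‖y‖) ^ (-γ)) := by
                apply mul_le_mul
                · exact mul_le_mul_of_nonneg_right hmono hP2p.le
                · exact hαB
                · exact hwnn
                · positivity
            _ = 2 ^ γ * (((1 + ‖y‖) ^ (γ - 1 - d) * (1 + ‖y‖) ^ (-γ)) * P2) := by ring
            _ = 2 ^ γ * (Y * P2) := by rw [hycomb]
        have hcK1 : 2 ^ γ * C ≤ K := by rw [hK_def]; exact hk3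
        have hcK2 : 2 * C ≤ K := by rw [hK_def]; exact hk4
        calc |A (x - y) - A (-y)| * (1 + ‖x‖) ^ (-γ)
            ≤ C * (2 ^ γ * (Y * P2)) + C * (2 * (Y * P1)) := by
              refine hmaj.trans (add_le_add ?_ ?_)
              · exact mul_le_mul_of_nonneg_left hterm1 hC
              · exact mul_le_mul_of_nonneg_left hterm2 hC
          _ = (2 ^ γ * C) * (Y * P2) + (2 * C) * (Y * P1) := by ring
          _ ≤ K * (Y * P2) + K * (Y * P1) := by
              refine add_le_add ?_ ?_
              · exact mul_le_mul_of_nonneg_right hcK1 (by positivity)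
              · exact mul_le_mul_of_nonneg_right hcK2 (by positivity)
          _ = K * (Y * (P1 + P2)) := by ring
  -- measurability of the product integrand
  have hwm : Measurable (fun x : EuclideanSpace ℝ (Fin d) => (1 + ‖x‖) ^ (-γ)) :=
    ((continuous_const.add continuous_norm).rpow_const
      (fun x => Or.inl (ne_of_gt (add_pos_of_pos_of_nonneg one_pos (norm_nonneg _))))).measurable
  have hΦm : Measurable (fun p : EuclideanSpace ℝ (Fin d) × EuclideanSpace ℝ (Fin d) =>
      (A (p.1 - p.2) - A (-p.2)) * h p.2 * (1 + ‖p.1‖) ^ (-γ)) := by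
    apply Measurable.mul
    · exact ((hAmeas.comp (measurable_fst.sub measurable_snd)).sub
        (hAmeas.comp measurable_snd.neg)).mul (hmeas.comp measurable_snd)
    · exact hwm.comp measurable_fst
  -- integrability of the comparison function
  have hfr : (Module.finrank ℝ (EuclideanSpace ℝ (Fin d)) : ℝ) < γ - 1 := by
    rw [finrank_euclideanSpace_fin]; linarith
  have hPint : Integrable (fun x : EuclideanSpace ℝ (Fin d) => (1 + ‖x‖) ^ (-(γ - 1))) :=
    integrable_one_add_norm hfr
  set I : ℝ≥0∞ := ∫⁻ x : EuclideanSpace ℝ (Fin d), ENNReal.ofReal ((1 + ‖x‖) ^ (-(γ - 1)))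
    with hI_def
  have hPnn : ∀ x : EuclideanSpace ℝ (Fin d), 0 ≤ (1 + ‖x‖) ^ (-(γ - 1)) :=
    fun x => Real.rpow_nonneg (by positivity) _
  have hI : I < ⊤ := by
    have h2 := hPint.2
    rwa [hasFiniteIntegral_iff_ofReal (Eventually.of_forall hPnn)] at h2
  have hPm : Measurable (fun x : EuclideanSpace ℝ (Fin d) =>
      ENNReal.ofReal ((1 + ‖x‖) ^ (-(γ - 1)))) :=
    ENNReal.measurable_ofReal.comp
      ((continuous_const.add continuous_norm).rpow_const
        (fun x => Or.inl (ne_of_gt (add_pos_of_pos_of_nonneg one_pos (norm_nonneg _))))).measurable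
  have hItrans : ∀ y : EuclideanSpace ℝ (Fin d),
      (∫⁻ x : EuclideanSpace ℝ (Fin d), ENNReal.ofReal ((1 + ‖x - y‖) ^ (-(γ - 1)))) = I :=
    fun y => lintegral_sub_right_eq_self
      (fun x => ENNReal.ofReal ((1 + ‖x‖) ^ (-(γ - 1)))) y
  have hH : (∫⁻ y : EuclideanSpace ℝ (Fin d),
      ENNReal.ofReal (|h y| * (1 + ‖y‖) ^ (-((d:ℝ) + 1)))) < ⊤ := by
    have h2 := hint.2
    rwa [hasFiniteIntegral_iff_ofReal (Eventually.of_forall fun y => by positivity)] at h2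
  -- integrability on the product space
  have hΦint : Integrable (fun p : EuclideanSpace ℝ (Fin d) × EuclideanSpace ℝ (Fin d) =>
      (A (p.1 - p.2) - A (-p.2)) * h p.2 * (1 + ‖p.1‖) ^ (-γ))
      (volume.prod volume) := by
    refine ⟨hΦm.aestronglyMeasurable, ?_⟩
    rw [hasFiniteIntegral_iff_norm]
    have hmeasOf : Measurable (fun p : EuclideanSpace ℝ (Fin d) × EuclideanSpace ℝ (Fin d) =>
        ENNReal.ofReal ‖(A (p.1 - p.2) - A (-p.2)) * h p.2 * (1 + ‖p.1‖) ^ (-γ)‖) :=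
      ENNReal.measurable_ofReal.comp hΦm.norm
    rw [lintegral_prod_symm _ hmeasOf.aemeasurable]
    have hbnd : ∀ y : EuclideanSpace ℝ (Fin d),
        (∫⁻ x, ENNReal.ofReal ‖(A (x - y) - A (-y)) * h y * (1 + ‖x‖) ^ (-γ)‖) ≤
          ENNReal.ofReal (|h y| * (1 + ‖y‖) ^ (-((d:ℝ) + 1))) *
            (ENNReal.ofReal K * (I + I)) := by
      intro y
      have hptw : ∀ x : EuclideanSpace ℝ (Fin d),
          ‖(A (x - y) - A (-y)) * h y * (1 + ‖x‖) ^ (-γ)‖ ≤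
            (|h y| * (1 + ‖y‖) ^ (-((d:ℝ) + 1)) * K) *
              ((1 + ‖x‖) ^ (-(γ - 1)) + (1 + ‖x - y‖) ^ (-(γ - 1))) := by
        intro x
        have h1 : ‖(A (x - y) - A (-y)) * h y * (1 + ‖x‖) ^ (-γ)‖ =
            |h y| * (|A (x - y) - A (-y)| * (1 + ‖x‖) ^ (-γ)) := by
          rw [Real.norm_eq_abs, abs_mul, abs_mul,
            abs_of_nonneg (Real.rpow_nonneg (by positivity) (-γ))]
          ring
        rw [h1]
        calc |h y| * (|A (x - y) - A (-y)| * (1 + ‖x‖) ^ (-γ))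
            ≤ |h y| * (K * ((1 + ‖y‖) ^ (-((d:ℝ) + 1)) *
                ((1 + ‖x‖) ^ (-(γ - 1)) + (1 + ‖x - y‖) ^ (-(γ - 1))))) :=
              mul_le_mul_of_nonneg_left (key x y) (abs_nonneg _)
          _ = _ := by ring
      have hcnn : 0 ≤ |h y| * (1 + ‖y‖) ^ (-((d:ℝ) + 1)) * K := by positivity
      calc (∫⁻ x, ENNReal.ofReal ‖(A (x - y) - A (-y)) * h y * (1 + ‖x‖) ^ (-γ)‖)
          ≤ ∫⁻ x, ENNReal.ofReal ((|h y| * (1 + ‖y‖) ^ (-((d:ℝ) + 1)) * K) *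
              ((1 + ‖x‖) ^ (-(γ - 1)) + (1 + ‖x - y‖) ^ (-(γ - 1)))) :=
            lintegral_mono fun x => ENNReal.ofReal_le_ofReal (hptw x)
        _ = ∫⁻ x, ENNReal.ofReal (|h y| * (1 + ‖y‖) ^ (-((d:ℝ) + 1)) * K) *
              (ENNReal.ofReal ((1 + ‖x‖) ^ (-(γ - 1))) +
               ENNReal.ofReal ((1 + ‖x - y‖) ^ (-(γ - 1)))) := by
            congr 1
            funext x
            rw [ENNReal.ofReal_mul hcnn,
              ENNReal.ofReal_add (hPnn x) (Real.rpow_nonneg (by positivity) _)]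
        _ = ENNReal.ofReal (|h y| * (1 + ‖y‖) ^ (-((d:ℝ) + 1)) * K) *
              ∫⁻ x, (ENNReal.ofReal ((1 + ‖x‖) ^ (-(γ - 1))) +
                     ENNReal.ofReal ((1 + ‖x - y‖) ^ (-(γ - 1)))) :=
            lintegral_const_mul' _ _ ENNReal.ofReal_ne_top
        _ = ENNReal.ofReal (|h y| * (1 + ‖y‖) ^ (-((d:ℝ) + 1)) * K) * (I + I) := by
            rw [lintegral_add_left hPm, hItrans y]
        _ = ENNReal.ofReal (|h y| * (1 + ‖y‖) ^ (-((d:ℝ) + 1))) *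
              (ENNReal.ofReal K * (I + I)) := by
            rw [ENNReal.ofReal_mul (by positivity), mul_assoc]
    calc (∫⁻ y, ∫⁻ x, ENNReal.ofReal
            ‖(A (x - y) - A (-y)) * h y * (1 + ‖x‖) ^ (-γ)‖ ∂volume ∂volume)
        ≤ ∫⁻ y, ENNReal.ofReal (|h y| * (1 + ‖y‖) ^ (-((d:ℝ) + 1))) *
            (ENNReal.ofReal K * (I + I)) ∂volume := lintegral_mono hbnd
      _ = (∫⁻ y, ENNReal.ofReal (|h y| * (1 + ‖y‖) ^ (-((d:ℝ) + 1))) ∂volume) *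
            (ENNReal.ofReal K * (I + I)) :=
          lintegral_mul_const' _ _ (by
            exact ENNReal.mul_ne_top ENNReal.ofReal_ne_top
              (by simp [ENNReal.add_ne_top, hI.ne]))
      _ < ⊤ := ENNReal.mul_lt_top hH
            (ENNReal.mul_lt_top ENNReal.ofReal_lt_top
              (by simpa using ENNReal.add_lt_top.mpr ⟨hI, hI⟩))
  -- conclude
  have hrw : (fun x : EuclideanSpace ℝ (Fin d) =>
      (∫ y : EuclideanSpace ℝ (Fin d), (A (x - y) - A (-y)) * h y) * (1 + ‖x‖) ^ (-γ))
      = fun x : EuclideanSpace ℝ (Fin d) =>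
        ∫ y : EuclideanSpace ℝ (Fin d), (A (x - y) - A (-y)) * h y * (1 + ‖x‖) ^ (-γ) := by
    funext x
    rw [← integral_mul_const]
  rw [hrw]
  exact hΦint.integral_prod_left
end
end

section
/- Let 1 ≤ p < ∞ and 0 < γ < δ. For every f ∈ B^p_γ and every A > 1, setting R = A^{p/δ}, the decomposition f = f·1_{|x|≤R} + f·1_{|x|>R} satisfies ‖f·1_{|x|≤R}‖_{L^p} ≤ C A^{γ/δ} ‖f‖_{B^p_γ} and ‖f·1_{|x|>R}‖_{L^p_{w_δ}} ≤ C A^{γ/δ − 1} ‖f‖_{B^p_γ}, for a constant C depending only on p, γ, δ, d. -/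
open MeasureTheory Real Filter

noncomputable section

theorem stmt_9 (d : ℕ) (p γ δ : ℝ) (hp : 1 ≤ p) (hγ : 0 < γ) (hδ : γ < δ) :
    ∃ C : ℝ, 0 < C ∧
      ∀ f : EuclideanSpace ℝ (Fin d) → ℝ, Measurable f →
      ∀ M : ℝ, 0 ≤ M →
      (∀ R : ℝ, 1 ≤ R →
        (∫⁻ x in Metric.ball (0 : EuclideanSpace ℝ (Fin d)) R, ENNReal.ofReal (|f x| ^ p))
          ≤ ENNReal.ofReal (M ^ p * R ^ γ)) →
      ∀ A : ℝ, 1 < A →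
        (∫⁻ x in Metric.ball (0 : EuclideanSpace ℝ (Fin d)) (A ^ (p / δ)),
            ENNReal.ofReal (|f x| ^ p))
          ≤ ENNReal.ofReal ((C * A ^ (γ / δ) * M) ^ p) ∧
        (∫⁻ x in {x : EuclideanSpace ℝ (Fin d) | A ^ (p / δ) < ‖x‖},
            ENNReal.ofReal (|f x| ^ p * (1 + ‖x‖) ^ (-δ)))
          ≤ ENNReal.ofReal ((C * A ^ (γ / δ - 1) * M) ^ p) := by
  classical
  have hδ0 : (0:ℝ) < δ := lt_trans hγ hδ
  have hp0 : (0:ℝ) < p := lt_of_lt_of_le one_pos hp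
  have hr1 : (2:ℝ) ^ (γ - δ) < 1 :=
    Real.rpow_lt_one_of_one_lt_of_neg one_lt_two (by linarith)
  have hr0 : (0:ℝ) < 2 ^ (γ - δ) := Real.rpow_pos_of_pos two_pos _
  have h2 : (0:ℝ) < 1 - 2 ^ (γ - δ) := by linarith
  set C : ℝ := 1 + 4 ^ γ / (1 - 2 ^ (γ - δ)) with hCdef
  have h4 : (0:ℝ) ≤ 4 ^ γ / (1 - 2 ^ (γ - δ)) :=
    div_nonneg (Real.rpow_nonneg (by norm_num) _) h2.le
  have hC1 : 1 ≤ C := by simp only [hCdef]; linarith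
  have hC0 : (0:ℝ) < C := lt_of_lt_of_le one_pos hC1
  refine ⟨C, hC0, ?_⟩
  intro f hf M hM hB A hA
  have hA0 : (0:ℝ) < A := lt_trans one_pos hA
  set R : ℝ := A ^ (p / δ) with hRdef
  have hR1 : (1:ℝ) ≤ R := Real.one_le_rpow hA.le (by positivity)
  have hR0 : (0:ℝ) < R := lt_of_lt_of_le one_pos hR1
  have hCp : C ≤ C ^ p := by
    calc C = C ^ (1:ℝ) := (Real.rpow_one C).symm
    _ ≤ C ^ p := Real.rpow_le_rpow_of_exponent_le hC1 hp
  have hCp1 : (1:ℝ) ≤ C ^ p := le_trans hC1 hCp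
  constructor
  · -- first part
    refine le_trans (hB R hR1) (ENNReal.ofReal_le_ofReal ?_)
    have hRγ : R ^ γ = (A ^ (γ / δ)) ^ p := by
      rw [hRdef, ← Real.rpow_mul hA0.le, ← Real.rpow_mul hA0.le]
      ring_nf
    have hexp : (C * A ^ (γ / δ) * M) ^ p = C ^ p * (A ^ (γ / δ)) ^ p * M ^ p := by
      rw [Real.mul_rpow (by positivity) hM, Real.mul_rpow hC0.le (by positivity)]
    rw [hexp, hRγ]
    have hAp : (0:ℝ) ≤ (A ^ (γ / δ)) ^ p := by positivity
    nlinarith [mul_nonneg (mul_nonneg (sub_nonneg.2 hCp1) hAp) (Real.rpow_nonneg hM p)]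
  · -- second part
    have hmeas : Measurable fun x : EuclideanSpace ℝ (Fin d) => ENNReal.ofReal (|f x| ^ p) :=
      (hf.abs.pow measurable_const).ennreal_ofReal
    set S : ℕ → Set (EuclideanSpace ℝ (Fin d)) :=
      fun k => {x | R * 2 ^ k < ‖x‖ ∧ ‖x‖ ≤ R * 2 ^ (k + 1)} with hSdef
    have hcover : {x : EuclideanSpace ℝ (Fin d) | R < ‖x‖} ⊆ ⋃ k, S k := by
      intro x hx
      simp only [Set.mem_setOf_eq] at hx
      have hP : ∃ n : ℕ, ‖x‖ ≤ R * 2 ^ (n + 1) := by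
        obtain ⟨n, hn⟩ := pow_unbounded_of_one_lt (‖x‖) (one_lt_two : (1:ℝ) < 2)
        refine ⟨n, le_trans hn.le ?_⟩
        have h1 : (2:ℝ) ^ n ≤ 2 ^ (n + 1) := by
          apply pow_le_pow_right₀ one_le_two (Nat.le_succ n)
        nlinarith [pow_pos (two_pos (α := ℝ)) (n + 1)]
      have hn2 : ‖x‖ ≤ R * 2 ^ (Nat.find hP + 1) := Nat.find_spec hP
      refine Set.mem_iUnion.2 ⟨Nat.find hP, ?_, hn2⟩
      rcases Nat.eq_zero_or_pos (Nat.find hP) with h0 | h0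
      · show R * 2 ^ Nat.find hP < ‖x‖
        rw [h0]; simpa using hx
      · have hmin := Nat.find_min hP (m := Nat.find hP - 1) (by omega)
        push_neg at hmin
        show R * 2 ^ Nat.find hP < ‖x‖
        have heq : Nat.find hP - 1 + 1 = Nat.find hP := by omega
        rwa [heq] at hmin
    have hterm : ∀ k : ℕ, (∫⁻ x in S k, ENNReal.ofReal (|f x| ^ p * (1 + ‖x‖) ^ (-δ))) ≤
        ENNReal.ofReal ((M ^ p * R ^ (γ - δ) * 4 ^ γ) * ((2:ℝ) ^ (γ - δ)) ^ k) := by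
      intro k
      have h2k : (0:ℝ) < 2 ^ k := pow_pos two_pos k
      have hball : S k ⊆ Metric.ball (0 : EuclideanSpace ℝ (Fin d)) (R * 2 ^ (k + 2)) := by
        intro x hx
        rw [mem_ball_zero_iff]
        have h2' : (2:ℝ) ^ (k + 1) < 2 ^ (k + 2) := by
          apply pow_lt_pow_right₀ one_lt_two (by omega)
        have := hx.2
        nlinarith
      have hstep1 : (∫⁻ x in S k, ENNReal.ofReal (|f x| ^ p * (1 + ‖x‖) ^ (-δ))) ≤
          ∫⁻ x in S k, ENNReal.ofReal ((R * 2 ^ k) ^ (-δ)) * ENNReal.ofReal (|f x| ^ p) := by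
        apply setLIntegral_mono (measurable_const.mul hmeas)
        intro x hx
        rw [Pi.mul_apply, ← ENNReal.ofReal_mul (by positivity)]
        apply ENNReal.ofReal_le_ofReal
        rw [mul_comm ((R * 2 ^ k) ^ (-δ))]
        have hle : R * 2 ^ k ≤ 1 + ‖x‖ := by
          have := hx.1; linarith
        exact mul_le_mul_of_nonneg_left
          (Real.rpow_le_rpow_of_nonpos (by positivity) hle (by linarith)) (by positivity)
      have hstep2 : (∫⁻ x in S k, ENNReal.ofReal ((R * 2 ^ k) ^ (-δ)) * ENNReal.ofReal (|f x| ^ p))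
          = ENNReal.ofReal ((R * 2 ^ k) ^ (-δ)) * ∫⁻ x in S k, ENNReal.ofReal (|f x| ^ p) :=
        lintegral_const_mul' _ _ ENNReal.ofReal_ne_top
      have hstep3 : (∫⁻ x in S k, ENNReal.ofReal (|f x| ^ p)) ≤
          ENNReal.ofReal (M ^ p * (R * 2 ^ (k + 2)) ^ γ) := by
        refine le_trans (lintegral_mono_set hball) (hB _ ?_)
        have h1 : (1:ℝ) ≤ 2 ^ (k + 2) := one_le_pow₀ one_le_two
        nlinarith
      calc (∫⁻ x in S k, ENNReal.ofReal (|f x| ^ p * (1 + ‖x‖) ^ (-δ)))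
          ≤ ∫⁻ x in S k, ENNReal.ofReal ((R * 2 ^ k) ^ (-δ)) * ENNReal.ofReal (|f x| ^ p) := hstep1
        _ = ENNReal.ofReal ((R * 2 ^ k) ^ (-δ)) * ∫⁻ x in S k, ENNReal.ofReal (|f x| ^ p) := hstep2
        _ ≤ ENNReal.ofReal ((R * 2 ^ k) ^ (-δ)) * ENNReal.ofReal (M ^ p * (R * 2 ^ (k + 2)) ^ γ) :=
            mul_le_mul_right hstep3 _
        _ = ENNReal.ofReal ((R * 2 ^ k) ^ (-δ) * (M ^ p * (R * 2 ^ (k + 2)) ^ γ)) :=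
            (ENNReal.ofReal_mul (by positivity)).symm
        _ = ENNReal.ofReal ((M ^ p * R ^ (γ - δ) * 4 ^ γ) * ((2:ℝ) ^ (γ - δ)) ^ k) := by
            congr 1
            have e1 : (R * 2 ^ k) ^ (-δ) = R ^ (-δ) * (2:ℝ) ^ ((k:ℝ) * (-δ)) := by
              rw [Real.mul_rpow hR0.le (by positivity), ← Real.rpow_natCast 2 k,
                ← Real.rpow_mul two_pos.le]
            have e2 : (R * 2 ^ (k + 2)) ^ γ = R ^ γ * (2:ℝ) ^ (((k:ℝ) + 2) * γ) := by
              rw [Real.mul_rpow hR0.le (by positivity), ← Real.rpow_natCast 2 (k + 2),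
                ← Real.rpow_mul two_pos.le]
              push_cast
              ring_nf
            have e3 : ((2:ℝ) ^ (γ - δ)) ^ k = (2:ℝ) ^ ((γ - δ) * (k:ℝ)) := by
              rw [← Real.rpow_natCast ((2:ℝ) ^ (γ - δ)) k, ← Real.rpow_mul two_pos.le]
            have e4 : (4:ℝ) ^ γ = (2:ℝ) ^ (2 * γ) := by
              have h42 : (4:ℝ) = (2:ℝ) ^ (2:ℝ) := by
                rw [show ((2:ℝ) ^ (2:ℝ)) = (2:ℝ) ^ ((2:ℕ):ℝ) by norm_num, Real.rpow_natCast]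
                norm_num
              rw [h42, ← Real.rpow_mul two_pos.le]
            have e5 : R ^ (-δ) * R ^ γ = R ^ (γ - δ) := by
              rw [← Real.rpow_add hR0]; ring_nf
            have e6 : (2:ℝ) ^ ((k:ℝ) * (-δ)) * (2:ℝ) ^ (((k:ℝ) + 2) * γ)
                = (2:ℝ) ^ (2 * γ) * (2:ℝ) ^ ((γ - δ) * (k:ℝ)) := by
              rw [← Real.rpow_add two_pos, ← Real.rpow_add two_pos]; ring_nf
            rw [e1, e2, e3, e4]
            calc R ^ (-δ) * (2:ℝ) ^ ((k:ℝ) * (-δ)) * (M ^ p * (R ^ γ * (2:ℝ) ^ (((k:ℝ) + 2) * γ)))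
                = M ^ p * (R ^ (-δ) * R ^ γ) *
                  ((2:ℝ) ^ ((k:ℝ) * (-δ)) * (2:ℝ) ^ (((k:ℝ) + 2) * γ)) := by ring
              _ = M ^ p * R ^ (γ - δ) * ((2:ℝ) ^ (2 * γ) * (2:ℝ) ^ ((γ - δ) * (k:ℝ))) := by
                  rw [e5, e6]
              _ = M ^ p * R ^ (γ - δ) * (2:ℝ) ^ (2 * γ) * (2:ℝ) ^ ((γ - δ) * (k:ℝ)) := by ring
    have hsum : (∑' k : ℕ, ENNReal.ofReal ((M ^ p * R ^ (γ - δ) * 4 ^ γ) * ((2:ℝ) ^ (γ - δ)) ^ k))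
        = ENNReal.ofReal (M ^ p * R ^ (γ - δ) * 4 ^ γ) * ENNReal.ofReal ((1 - 2 ^ (γ - δ))⁻¹) := by
      have hk : ∀ k : ℕ, ENNReal.ofReal ((M ^ p * R ^ (γ - δ) * 4 ^ γ) * ((2:ℝ) ^ (γ - δ)) ^ k)
          = ENNReal.ofReal (M ^ p * R ^ (γ - δ) * 4 ^ γ) * ENNReal.ofReal ((2:ℝ) ^ (γ - δ)) ^ k := by
        intro k
        rw [ENNReal.ofReal_mul (by positivity), ENNReal.ofReal_pow hr0.le]
      simp_rw [hk]
      rw [ENNReal.tsum_mul_left, ENNReal.tsum_geometric]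
      congr 1
      rw [ENNReal.ofReal_inv_of_pos h2, ENNReal.ofReal_sub 1 hr0.le, ENNReal.ofReal_one]
    have hRgd : R ^ (γ - δ) = (A ^ (γ / δ - 1)) ^ p := by
      rw [hRdef, ← Real.rpow_mul hA0.le, ← Real.rpow_mul hA0.le]
      congr 1
      field_simp
    have hexp2 : (C * A ^ (γ / δ - 1) * M) ^ p = C ^ p * (A ^ (γ / δ - 1)) ^ p * M ^ p := by
      rw [Real.mul_rpow (by positivity) hM, Real.mul_rpow hC0.le (by positivity)]
    have hfinal : M ^ p * R ^ (γ - δ) * 4 ^ γ * (1 - 2 ^ (γ - δ))⁻¹ ≤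
        (C * A ^ (γ / δ - 1) * M) ^ p := by
      rw [hexp2, ← hRgd]
      have h5 : (4:ℝ) ^ γ * (1 - 2 ^ (γ - δ))⁻¹ ≤ C ^ p := by
        have : (4:ℝ) ^ γ * (1 - 2 ^ (γ - δ))⁻¹ = 4 ^ γ / (1 - 2 ^ (γ - δ)) :=
          (div_eq_mul_inv _ _).symm
        rw [this]
        calc (4:ℝ) ^ γ / (1 - 2 ^ (γ - δ)) ≤ C := by rw [hCdef]; linarith
          _ ≤ C ^ p := hCp
      have hX : (0:ℝ) ≤ R ^ (γ - δ) := Real.rpow_nonneg hR0.le _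
      have hMp : (0:ℝ) ≤ M ^ p := Real.rpow_nonneg hM _
      nlinarith [mul_nonneg (mul_nonneg hX hMp) (sub_nonneg.2 h5)]
    calc (∫⁻ x in {x : EuclideanSpace ℝ (Fin d) | R < ‖x‖},
            ENNReal.ofReal (|f x| ^ p * (1 + ‖x‖) ^ (-δ)))
        ≤ ∫⁻ x in ⋃ k, S k, ENNReal.ofReal (|f x| ^ p * (1 + ‖x‖) ^ (-δ)) :=
          lintegral_mono_set hcover
      _ ≤ ∑' k, ∫⁻ x in S k, ENNReal.ofReal (|f x| ^ p * (1 + ‖x‖) ^ (-δ)) :=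
          lintegral_iUnion_le _ _
      _ ≤ ∑' k : ℕ, ENNReal.ofReal ((M ^ p * R ^ (γ - δ) * 4 ^ γ) * ((2:ℝ) ^ (γ - δ)) ^ k) :=
          ENNReal.tsum_le_tsum hterm
      _ = ENNReal.ofReal (M ^ p * R ^ (γ - δ) * 4 ^ γ) * ENNReal.ofReal ((1 - 2 ^ (γ - δ))⁻¹) :=
          hsum
      _ = ENNReal.ofReal ((M ^ p * R ^ (γ - δ) * 4 ^ γ) * (1 - 2 ^ (γ - δ))⁻¹) :=
          (ENNReal.ofReal_mul (by positivity)).symm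
      _ ≤ ENNReal.ofReal ((C * A ^ (γ / δ - 1) * M) ^ p) := by
          apply ENNReal.ofReal_le_ofReal
          calc M ^ p * R ^ (γ - δ) * 4 ^ γ * (1 - 2 ^ (γ - δ))⁻¹
              ≤ (C * A ^ (γ / δ - 1) * M) ^ p := hfinal
end
end

section
/- Let 1 ≤ p < ∞ and 0 < γ < δ. Suppose f ∈ L^p_loc(ℝ^d) and there is c > 0 such that for every A > 0 one can write f = f₀ + f₁ with ‖f₀‖_{L^p} ≤ c A^{γ/δ} and ‖f₁‖_{L^p_{w_δ}} ≤ c A^{γ/δ − 1}. Then f ∈ B^p_γ, i.e., sup_{R ≥ 1} R^{-γ} ∫_{B(0,R)} |f|^p dx < ∞. -/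
open MeasureTheory Real Filter

noncomputable section

theorem stmt_10 (d : ℕ) (p γ δ : ℝ) (hp : 1 ≤ p) (hγ : 0 < γ) (hδ : γ < δ)
    (f : EuclideanSpace ℝ (Fin d) → ℝ) (hmeas : Measurable f)
    (c : ℝ) (hc : 0 < c)
    (hdecomp : ∀ A : ℝ, 0 < A → ∃ f₀ f₁ : EuclideanSpace ℝ (Fin d) → ℝ,
      Measurable f₀ ∧ Measurable f₁ ∧ (∀ x, f x = f₀ x + f₁ x) ∧
      (∫⁻ x : EuclideanSpace ℝ (Fin d), ENNReal.ofReal (|f₀ x| ^ p))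
        ≤ ENNReal.ofReal ((c * A ^ (γ / δ)) ^ p) ∧
      (∫⁻ x : EuclideanSpace ℝ (Fin d), ENNReal.ofReal (|f₁ x| ^ p * (1 + ‖x‖) ^ (-δ)))
        ≤ ENNReal.ofReal ((c * A ^ (γ / δ - 1)) ^ p)) :
    ∃ M : ℝ, ∀ R : ℝ, 1 ≤ R →
      (∫⁻ x in Metric.ball (0 : EuclideanSpace ℝ (Fin d)) R, ENNReal.ofReal (|f x| ^ p))
        ≤ ENNReal.ofReal (M * R ^ γ) := by
  refine ⟨2 ^ p * (c ^ p * (1 + 2 ^ δ)), fun R hR => ?_⟩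
  have hp0 : (0:ℝ) < p := lt_of_lt_of_le one_pos hp
  have hδ0 : (0:ℝ) < δ := hγ.trans hδ
  have hR0 : (0:ℝ) < R := lt_of_lt_of_le one_pos hR
  have hA : (0:ℝ) < R ^ (δ / p) := Real.rpow_pos_of_pos hR0 _
  obtain ⟨f₀, f₁, hm0, hm1, hsum, h0, h1⟩ := hdecomp _ hA
  -- algebraic simplification of the bounds
  have e0 : (c * (R ^ (δ / p)) ^ (γ / δ)) ^ p = c ^ p * R ^ γ := by
    rw [← Real.rpow_mul hR0.le, Real.mul_rpow hc.le (Real.rpow_nonneg hR0.le _),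
      ← Real.rpow_mul hR0.le, show δ / p * (γ / δ) * p = γ by field_simp]
  have e1 : (c * (R ^ (δ / p)) ^ (γ / δ - 1)) ^ p = c ^ p * R ^ (γ - δ) := by
    rw [← Real.rpow_mul hR0.le, Real.mul_rpow hc.le (Real.rpow_nonneg hR0.le _),
      ← Real.rpow_mul hR0.le, show δ / p * (γ / δ - 1) * p = γ - δ by field_simp]
  rw [e0] at h0; rw [e1] at h1
  -- pointwise bound
  have key : ∀ x, |f x| ^ p ≤ 2 ^ p * |f₀ x| ^ p + 2 ^ p * |f₁ x| ^ p := by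
    intro x
    have h1' : |f x| ≤ |f₀ x| + |f₁ x| := by rw [hsum x]; exact abs_add_le _ _
    have h2' : |f₀ x| + |f₁ x| ≤ 2 * max |f₀ x| |f₁ x| := by
      rw [two_mul]; exact add_le_add (le_max_left _ _) (le_max_right _ _)
    have hmax : (max |f₀ x| |f₁ x|) ^ p ≤ |f₀ x| ^ p + |f₁ x| ^ p := by
      rcases max_cases |f₀ x| |f₁ x| with ⟨h, _⟩ | ⟨h, _⟩ <;> rw [h]
      · exact le_add_of_nonneg_right (Real.rpow_nonneg (abs_nonneg _) _)
      · exact le_add_of_nonneg_left (Real.rpow_nonneg (abs_nonneg _) _)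
    calc |f x| ^ p ≤ (2 * max |f₀ x| |f₁ x|) ^ p :=
          Real.rpow_le_rpow (abs_nonneg _) (h1'.trans h2') hp0.le
      _ = 2 ^ p * (max |f₀ x| |f₁ x|) ^ p :=
          Real.mul_rpow (by norm_num) (le_max_of_le_left (abs_nonneg _))
      _ ≤ 2 ^ p * (|f₀ x| ^ p + |f₁ x| ^ p) := by
          have h2p : (0:ℝ) ≤ 2 ^ p := Real.rpow_nonneg (by norm_num) _
          nlinarith
      _ = 2 ^ p * |f₀ x| ^ p + 2 ^ p * |f₁ x| ^ p := by ring
  -- bound for f₁ on the ball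
  have key1 : ∀ x ∈ Metric.ball (0 : EuclideanSpace ℝ (Fin d)) R,
      |f₁ x| ^ p ≤ (1 + R) ^ δ * (|f₁ x| ^ p * (1 + ‖x‖) ^ (-δ)) := by
    intro x hx
    have hxR : ‖x‖ < R := by simpa [Metric.mem_ball, dist_eq_norm] using hx
    have hx0 : (0:ℝ) < 1 + ‖x‖ := by positivity
    have hid : |f₁ x| ^ p = (|f₁ x| ^ p * (1 + ‖x‖) ^ (-δ)) * (1 + ‖x‖) ^ δ := by
      rw [mul_assoc, ← Real.rpow_add hx0, neg_add_cancel, Real.rpow_zero, mul_one]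
    calc |f₁ x| ^ p = |f₁ x| ^ p * (1 + ‖x‖) ^ (-δ) * (1 + ‖x‖) ^ δ := hid
      _ ≤ |f₁ x| ^ p * (1 + ‖x‖) ^ (-δ) * (1 + R) ^ δ :=
          mul_le_mul_of_nonneg_left
            (Real.rpow_le_rpow hx0.le (by linarith : 1 + ‖x‖ ≤ 1 + R) hδ0.le) (by positivity)
      _ = (1 + R) ^ δ * (|f₁ x| ^ p * (1 + ‖x‖) ^ (-δ)) := mul_comm _ _
  -- integral bounds
  set B := Metric.ball (0 : EuclideanSpace ℝ (Fin d)) R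
  have step1 : (∫⁻ x in B, ENNReal.ofReal (|f x| ^ p))
      ≤ ENNReal.ofReal (2 ^ p) * ((∫⁻ x in B, ENNReal.ofReal (|f₀ x| ^ p))
        + ∫⁻ x in B, ENNReal.ofReal (|f₁ x| ^ p)) := by
    have hmeas0 : Measurable fun x : EuclideanSpace ℝ (Fin d) =>
        ENNReal.ofReal (2 ^ p) * ENNReal.ofReal (|f₀ x| ^ p) := by fun_prop
    calc (∫⁻ x in B, ENNReal.ofReal (|f x| ^ p))
        ≤ ∫⁻ x in B, (ENNReal.ofReal (2 ^ p) * ENNReal.ofReal (|f₀ x| ^ p)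
            + ENNReal.ofReal (2 ^ p) * ENNReal.ofReal (|f₁ x| ^ p)) := by
          refine lintegral_mono fun x => ?_
          rw [← ENNReal.ofReal_mul (Real.rpow_nonneg (by norm_num) _),
            ← ENNReal.ofReal_mul (Real.rpow_nonneg (by norm_num) _),
            ← ENNReal.ofReal_add (by positivity) (by positivity)]
          exact ENNReal.ofReal_le_ofReal (key x)
      _ = (∫⁻ x in B, ENNReal.ofReal (2 ^ p) * ENNReal.ofReal (|f₀ x| ^ p))
            + ∫⁻ x in B, ENNReal.ofReal (2 ^ p) * ENNReal.ofReal (|f₁ x| ^ p) :=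
          lintegral_add_left hmeas0 _
      _ = ENNReal.ofReal (2 ^ p) * ((∫⁻ x in B, ENNReal.ofReal (|f₀ x| ^ p))
            + ∫⁻ x in B, ENNReal.ofReal (|f₁ x| ^ p)) := by
          rw [lintegral_const_mul' _ _ ENNReal.ofReal_ne_top,
            lintegral_const_mul' _ _ ENNReal.ofReal_ne_top, mul_add]
  have b0 : (∫⁻ x in B, ENNReal.ofReal (|f₀ x| ^ p))
      ≤ ENNReal.ofReal (c ^ p * R ^ γ) :=
    le_trans (setLIntegral_le_lintegral _ _) h0
  have b1 : (∫⁻ x in B, ENNReal.ofReal (|f₁ x| ^ p))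
      ≤ ENNReal.ofReal (2 ^ δ * (c ^ p * R ^ γ)) := by
    have : (∫⁻ x in B, ENNReal.ofReal (|f₁ x| ^ p))
        ≤ ∫⁻ x in B, ENNReal.ofReal ((1 + R) ^ δ) *
            ENNReal.ofReal (|f₁ x| ^ p * (1 + ‖x‖) ^ (-δ)) := by
      refine setLIntegral_mono (by fun_prop) fun x hx => ?_
      rw [← ENNReal.ofReal_mul (Real.rpow_nonneg (by positivity) _)]
      exact ENNReal.ofReal_le_ofReal (key1 x hx)
    refine this.trans ?_
    rw [lintegral_const_mul' _ _ ENNReal.ofReal_ne_top]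
    calc ENNReal.ofReal ((1 + R) ^ δ) * ∫⁻ x in B, ENNReal.ofReal (|f₁ x| ^ p * (1 + ‖x‖) ^ (-δ))
        ≤ ENNReal.ofReal ((1 + R) ^ δ) * ENNReal.ofReal (c ^ p * R ^ (γ - δ)) := by
          gcongr
          exact le_trans (setLIntegral_le_lintegral _ _) h1
      _ = ENNReal.ofReal ((1 + R) ^ δ * (c ^ p * R ^ (γ - δ))) := by
          rw [← ENNReal.ofReal_mul (Real.rpow_nonneg (by positivity) _)]
      _ ≤ ENNReal.ofReal (2 ^ δ * (c ^ p * R ^ γ)) := by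
          refine ENNReal.ofReal_le_ofReal ?_
          have h2R : (1 + R) ^ δ ≤ 2 ^ δ * R ^ δ := by
            rw [← Real.mul_rpow (by norm_num) hR0.le]
            exact Real.rpow_le_rpow (by positivity) (by linarith) hδ0.le
          have hRR : R ^ δ * R ^ (γ - δ) = R ^ γ := by
            rw [← Real.rpow_add hR0]; ring_nf
          calc (1 + R) ^ δ * (c ^ p * R ^ (γ - δ))
              ≤ 2 ^ δ * R ^ δ * (c ^ p * R ^ (γ - δ)) := by
                have : (0:ℝ) ≤ c ^ p * R ^ (γ - δ) := by positivity
                nlinarith [Real.rpow_nonneg (by positivity : (0:ℝ) ≤ 1 + R) δ]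
            _ = 2 ^ δ * (c ^ p * (R ^ δ * R ^ (γ - δ))) := by ring
            _ = 2 ^ δ * (c ^ p * R ^ γ) := by rw [hRR]
  calc (∫⁻ x in B, ENNReal.ofReal (|f x| ^ p))
      ≤ ENNReal.ofReal (2 ^ p) * ((∫⁻ x in B, ENNReal.ofReal (|f₀ x| ^ p))
        + ∫⁻ x in B, ENNReal.ofReal (|f₁ x| ^ p)) := step1
    _ ≤ ENNReal.ofReal (2 ^ p) *
        (ENNReal.ofReal (c ^ p * R ^ γ) + ENNReal.ofReal (2 ^ δ * (c ^ p * R ^ γ))) := by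
          gcongr
    _ = ENNReal.ofReal (2 ^ p * (c ^ p * (1 + 2 ^ δ)) * R ^ γ) := by
          rw [← ENNReal.ofReal_add (by positivity) (by positivity),
            ← ENNReal.ofReal_mul (Real.rpow_nonneg (by norm_num) _)]
          ring_nf
end
end
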